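/- Define c_m by the power series identity exp(Σ_{k≥1} z^k/k²) = Σ_{m≥0} c_m z^m. Then c_m = O(1/m²), i.e., there is an absolute constant C with c_m ≤ C/m² for all m ≥ 1. -/

import Mathlib

open Finset Real

/-- The coefficients `c m` of the power series `exp (∑_{k ≥ 1} z ^ k / k ^ 2)`,
given by `c 0 = 1` and the recurrence `c m = (1 / m) ∑_{k = 1}^{m} c (m - k) / k`,
i.e. `c m = (1 / m) ∑_{i = 0}^{m - 1} c i / (m - i)`. -/
noncomputable def cseq : ℕ → ℝ
  | 0 => 1
  | m + 1 =>
      (1 / ((m : ℝ) + 1)) * ∑ i : Fin (m + 1), cseq i / (((m : ℝ) + 1) - (i : ℕ))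

lemma cseq_succ (m : ℕ) :
    cseq (m + 1) =
      (1 / ((m : ℝ) + 1)) * ∑ i ∈ Finset.range (m + 1), cseq i / (((m : ℝ) + 1) - (i : ℕ)) := by
  rw [cseq]
  congr 1
  exact Fin.sum_univ_eq_sum_range (fun i => cseq i / (((m : ℝ) + 1) - (i : ℕ))) (m + 1)

lemma cseq_nonneg : ∀ m, 0 ≤ cseq m := by
  intro m
  induction m using Nat.strong_induction_on with
  | _ m ih =>
    match m with
    | 0 => simp [cseq]
    | m + 1 =>
      rw [cseq_succ]
      apply mul_nonneg (by positivity)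
      apply Finset.sum_nonneg
      intro i hi
      rw [Finset.mem_range] at hi
      apply div_nonneg (ih i (by omega))
      have : (i : ℝ) ≤ m := by exact_mod_cast Nat.lt_succ_iff.mp hi
      linarith

lemma cseq_le_one : ∀ m, cseq m ≤ 1 := by
  intro m
  induction m using Nat.strong_induction_on with
  | _ m ih =>
    match m with
    | 0 => simp [cseq]
    | m + 1 =>
      rw [cseq_succ]
      have h1 : ∑ i ∈ Finset.range (m + 1), cseq i / (((m : ℝ) + 1) - (i : ℕ)) ≤ (m : ℝ) + 1 := by
        have : ∀ i ∈ Finset.range (m + 1), cseq i / (((m : ℝ) + 1) - (i : ℕ)) ≤ 1 := by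
          intro i hi
          rw [Finset.mem_range] at hi
          have hi' : (i : ℝ) ≤ m := by exact_mod_cast Nat.lt_succ_iff.mp hi
          have hd : (1 : ℝ) ≤ ((m : ℝ) + 1) - i := by linarith
          calc cseq i / (((m : ℝ) + 1) - (i : ℕ)) ≤ 1 / (((m : ℝ) + 1) - (i : ℕ)) := by
                apply div_le_div_of_nonneg_right (ih i (by omega))
                linarith
              _ ≤ 1 := by
                rw [div_le_one (by linarith)]; linarith
        calc ∑ i ∈ Finset.range (m + 1), cseq i / (((m : ℝ) + 1) - (i : ℕ))
            ≤ ∑ _i ∈ Finset.range (m + 1), (1:ℝ) := Finset.sum_le_sum this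
          _ = (m : ℝ) + 1 := by simp
      rw [one_div, inv_mul_le_iff₀ (by positivity)]
      linarith

lemma harm_le (n : ℕ) : ∑ i ∈ range n, 1 / ((i : ℝ) + 1) ≤ 2 * Real.sqrt n := by
  induction n with
  | zero => simp
  | succ n ih =>
    rw [Finset.sum_range_succ]
    have h1 : 1 / ((n : ℝ) + 1) ≤ 2 * Real.sqrt (n + 1) - 2 * Real.sqrt n := by
      have hs : Real.sqrt n ≤ Real.sqrt (n + 1) := Real.sqrt_le_sqrt (by push_cast; linarith)
      have hsq : Real.sqrt ((n:ℝ)+1) * Real.sqrt ((n:ℝ)+1) = (n:ℝ)+1 :=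
        Real.mul_self_sqrt (by positivity)
      have hpos : 0 < Real.sqrt ((n:ℝ)+1) := Real.sqrt_pos.mpr (by positivity)
      have key : 1 ≤ (2 * Real.sqrt ((n:ℝ)+1) - 2 * Real.sqrt n) * (Real.sqrt ((n:ℝ)+1)) := by
        have hsqn : Real.sqrt (n:ℝ) * Real.sqrt (n:ℝ) = (n:ℝ) := Real.mul_self_sqrt (by positivity)
        have h2 : Real.sqrt n * Real.sqrt ((n:ℝ)+1) ≥ Real.sqrt n * Real.sqrt n := by
          apply mul_le_mul_of_nonneg_left hs (Real.sqrt_nonneg _)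
        nlinarith [Real.sqrt_nonneg (n:ℝ)]
      rw [div_le_iff₀ (by positivity : (0:ℝ) < (n:ℝ)+1)]
      calc (1:ℝ) ≤ (2 * Real.sqrt ((n:ℝ)+1) - 2 * Real.sqrt n) * (Real.sqrt ((n:ℝ)+1)) := key
        _ ≤ (2 * Real.sqrt ((n:ℝ)+1) - 2 * Real.sqrt n) * ((n:ℝ)+1) := by
          apply mul_le_mul_of_nonneg_left _ (by nlinarith [Real.sqrt_nonneg (n:ℝ), Real.sqrt_nonneg ((n:ℝ)+1)] : (0:ℝ) ≤ 2 * Real.sqrt ((n:ℝ)+1) - 2 * Real.sqrt n)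
          nlinarith [Real.sqrt_nonneg ((n:ℝ)+1), hsq]
    push_cast
    push_cast at ih h1
    linarith

lemma Q_le (n : ℕ) : ∑ i ∈ range n, 1 / (((i : ℝ) + 1) * Real.sqrt ((i:ℝ) + 1)) ≤ 3 := by
  have main : ∀ n : ℕ, 1 ≤ n → ∑ i ∈ range n, 1 / (((i : ℝ) + 1) * Real.sqrt ((i:ℝ) + 1)) ≤ 3 - 2 / Real.sqrt n := by
    intro n hn
    induction n with
    | zero => omega
    | succ n ih =>
      match n, ih with
      | 0, _ => norm_num
      | n+1, ih =>
        have ih' := ih (by omega)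
        rw [Finset.sum_range_succ]
        set a := Real.sqrt ((n:ℝ)+1) with ha
        set b := Real.sqrt ((n:ℝ)+2) with hb
        have hA : a * a = (n:ℝ)+1 := Real.mul_self_sqrt (by positivity)
        have hB : b * b = (n:ℝ)+2 := Real.mul_self_sqrt (by positivity)
        have hapos : 0 < a := Real.sqrt_pos.mpr (by positivity)
        have hbpos : 0 < b := Real.sqrt_pos.mpr (by positivity)
        have hab : a ≤ b := Real.sqrt_le_sqrt (by linarith)
        have key : 1 / (((n:ℝ)+2) * b) ≤ 2 / a - 2 / b := by
          rw [div_sub_div _ _ (ne_of_gt hapos) (ne_of_gt hbpos), div_le_div_iff₀ (by positivity) (by positivity)]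
          have h1 : (b - a) * (b + a) = 1 := by nlinarith
          have h2 : a*b + a*a ≤ 2*(b*b) := by nlinarith
          have h3 : a ≤ 2*(b*b)*(b-a) := by nlinarith [h1, h2, mul_pos hapos hbpos]
          nlinarith [mul_le_mul_of_nonneg_right h3 hbpos.le, hB]
        have goal_cast : Real.sqrt (((n:ℝ)+1)+1) = b := by rw [hb]; congr 1; ring
        push_cast at ih' ⊢
        rw [goal_cast]
        have : (↑n + 1 + 1 : ℝ) = (n:ℝ) + 2 := by ring
        rw [this]
        linarith
  rcases Nat.eq_zero_or_pos n with h | h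
  · simp [h]
  · have h2 : 0 ≤ 2 / Real.sqrt n := by positivity
    linarith [main n h]

lemma reflect_harm (M : ℕ) :
    ∑ i ∈ range M, 1 / ((M:ℝ) - i) = ∑ i ∈ range M, 1 / ((i:ℝ) + 1) := by
  rw [← Finset.sum_range_reflect (fun i => 1 / ((i:ℝ) + 1)) M]
  apply Finset.sum_congr rfl
  intro j hj
  rw [Finset.mem_range] at hj
  have h : ((M - 1 - j : ℕ) : ℝ) = (M:ℝ) - 1 - j := by
    have h2 : (M - 1 - j : ℕ) = M - (1 + j) := by omega
    rw [h2, Nat.cast_sub (by omega)]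
    push_cast
    ring
  rw [h]
  ring_nf

lemma term_bound (m j : ℕ) (hj : 1 ≤ j) (hjm : j < m) :
    1 / (((j:ℝ) * Real.sqrt j) * ((m:ℝ) - j)) ≤
      (2 / (m:ℝ)) * (1 / ((j:ℝ) * Real.sqrt j)) +
        (2 * Real.sqrt 2 / ((m:ℝ) * Real.sqrt m)) * (1 / ((m:ℝ) - j)) := by
  have hjr : (1:ℝ) ≤ (j:ℝ) := by exact_mod_cast hj
  have hjm' : (j:ℝ) + 1 ≤ (m:ℝ) := by exact_mod_cast hjm
  have hb : (1:ℝ) ≤ (m:ℝ) - j := by linarith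
  have hsj : 0 < Real.sqrt j := Real.sqrt_pos.mpr (by linarith)
  have hsm : 0 < Real.sqrt m := Real.sqrt_pos.mpr (by linarith)
  have ha : 0 < (j:ℝ) * Real.sqrt j := by positivity
  have hmpos : (0:ℝ) < m := by linarith
  have hs2 : 0 < Real.sqrt 2 := Real.sqrt_pos.mpr (by norm_num)
  by_cases hc : (m:ℝ) / 2 ≤ (m:ℝ) - j
  · have h1 : 1 / (((j:ℝ) * Real.sqrt j) * ((m:ℝ) - j)) ≤ (2 / (m:ℝ)) * (1 / ((j:ℝ) * Real.sqrt j)) := by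
      rw [div_mul_div_comm, mul_one, div_le_div_iff₀ (by positivity) (by positivity)]
      nlinarith [mul_le_mul_of_nonneg_right (show (m:ℝ) ≤ 2 * ((m:ℝ) - j) by linarith) ha.le]
    have h2 : 0 ≤ (2 * Real.sqrt 2 / ((m:ℝ) * Real.sqrt m)) * (1 / ((m:ℝ) - j)) := by positivity
    linarith
  · push_neg at hc
    have h2j : (m:ℝ) ≤ 2 * j := by linarith
    have hsu : Real.sqrt m ≤ Real.sqrt 2 * Real.sqrt j := by
      rw [← Real.sqrt_mul (by norm_num) (j:ℝ)]
      exact Real.sqrt_le_sqrt (by linarith)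
    have hmm : (m:ℝ) * Real.sqrt m ≤ 2 * Real.sqrt 2 * ((j:ℝ) * Real.sqrt j) := by
      calc (m:ℝ) * Real.sqrt m ≤ (2 * j) * (Real.sqrt 2 * Real.sqrt j) :=
            mul_le_mul h2j hsu hsm.le (by positivity)
        _ = 2 * Real.sqrt 2 * ((j:ℝ) * Real.sqrt j) := by ring
    have h3 : 1 / (((j:ℝ) * Real.sqrt j) * ((m:ℝ) - j)) ≤
        (2 * Real.sqrt 2 / ((m:ℝ) * Real.sqrt m)) * (1 / ((m:ℝ) - j)) := by
      rw [div_mul_div_comm, mul_one, div_le_div_iff₀ (by positivity) (by positivity)]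
      nlinarith [mul_le_mul_of_nonneg_right hmm (show (0:ℝ) ≤ (m:ℝ) - j by linarith)]
    have h4 : 0 ≤ (2 / (m:ℝ)) * (1 / ((j:ℝ) * Real.sqrt j)) := by positivity
    linarith

lemma sqrt_le_13 {m : ℕ} (h : m ≤ 169) : Real.sqrt m ≤ 13 := by
  have h1 : Real.sqrt m ≤ Real.sqrt 169 := Real.sqrt_le_sqrt (by exact_mod_cast h)
  rwa [show (169:ℝ) = 13^2 by norm_num, Real.sqrt_sq (by norm_num)] at h1

lemma sqrt2_le : Real.sqrt 2 ≤ 3/2 := by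
  have h1 : Real.sqrt 2 ≤ Real.sqrt (9/4) := Real.sqrt_le_sqrt (by norm_num)
  rwa [show (9/4:ℝ) = (3/2)^2 by norm_num, Real.sqrt_sq (by norm_num)] at h1

set_option maxRecDepth 8000 in
lemma key : ∀ m : ℕ, 1 ≤ m → cseq m ≤ 2197 / ((m:ℝ) * Real.sqrt m) := by
  intro m
  induction m using Nat.strong_induction_on with
  | _ m ih =>
    intro hm
    have hmr1 : (1:ℝ) ≤ (m:ℝ) := by exact_mod_cast hm
    have hsm : 0 < Real.sqrt m := Real.sqrt_pos.mpr (by linarith)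
    have hden : 0 < (m:ℝ) * Real.sqrt m := by positivity
    by_cases hsmall : m ≤ 169
    · have h13 : Real.sqrt m ≤ 13 := sqrt_le_13 hsmall
      have hm169 : (m:ℝ) ≤ 169 := by exact_mod_cast hsmall
      have hle : (m:ℝ) * Real.sqrt m ≤ 2197 := by nlinarith
      calc cseq m ≤ 1 := cseq_le_one m
        _ ≤ 2197 / ((m:ℝ) * Real.sqrt m) := by rw [le_div_iff₀ hden]; linarith
    · push_neg at hsmall
      obtain ⟨M, rfl⟩ : ∃ M, m = M + 1 := ⟨m - 1, by omega⟩
      have hM : 169 ≤ M := by omega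
      have hMr : (169:ℝ) ≤ (M:ℝ) := by exact_mod_cast hM
      set mr : ℝ := (M:ℝ) + 1 with hmr
      have hmrpos : (0:ℝ) < mr := by rw [hmr]; linarith
      have hmr170 : (170:ℝ) ≤ mr := by rw [hmr]; linarith
      have hsmr : 0 < Real.sqrt mr := Real.sqrt_pos.mpr hmrpos
      rw [cseq_succ M, Finset.sum_range_succ' (fun i => cseq i / (((M:ℝ) + 1) - (i:ℕ)))]
      -- the i = 0 term
      have h0 : cseq 0 / (((M:ℝ) + 1) - ((0:ℕ):ℝ)) = 1 / mr := by
        simp [cseq, hmr]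
      -- bound for the rest of the sum
      have hsum : ∑ i ∈ range M, cseq (i+1) / (((M:ℝ) + 1) - ((i+1:ℕ):ℝ)) ≤ 26364 / mr := by
        have termwise : ∀ i ∈ range M, cseq (i+1) / (((M:ℝ) + 1) - ((i+1:ℕ):ℝ)) ≤
            2197 * ((2 / mr) * (1 / (((i:ℝ)+1) * Real.sqrt ((i:ℝ)+1))) +
              (2 * Real.sqrt 2 / (mr * Real.sqrt mr)) * (1 / (mr - ((i:ℝ)+1)))) := by
          intro i hi
          rw [Finset.mem_range] at hi
          have hcast1 : ((i+1:ℕ):ℝ) = (i:ℝ) + 1 := by push_cast; ring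
          have hcast2 : (((M+1:ℕ)):ℝ) = mr := by rw [hmr]; push_cast; ring
          have hjr1 : (1:ℝ) ≤ (i:ℝ) + 1 := by
            have : (0:ℝ) ≤ (i:ℝ) := Nat.cast_nonneg i
            linarith
          have hir : (i:ℝ) + 1 + 1 ≤ mr := by
            rw [hmr]; have : (i:ℝ) + 1 ≤ (M:ℝ) := by exact_mod_cast hi
            linarith
          have hbpos : (0:ℝ) < mr - ((i:ℝ)+1) := by linarith
          have hsja : (0:ℝ) < ((i:ℝ)+1) * Real.sqrt ((i:ℝ)+1) := by positivity
          have step1 : cseq (i+1) / (((M:ℝ) + 1) - ((i+1:ℕ):ℝ)) ≤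
              (2197 / (((i:ℝ)+1) * Real.sqrt ((i:ℝ)+1))) / (mr - ((i:ℝ)+1)) := by
            rw [hcast1, show ((M:ℝ) + 1) = mr from hmr.symm]
            apply div_le_div_of_nonneg_right _ hbpos.le
            have := ih (i+1) (by omega) (by omega)
            calc cseq (i+1) ≤ 2197 / (((i+1:ℕ):ℝ) * Real.sqrt ((i+1:ℕ):ℝ)) := this
              _ = 2197 / (((i:ℝ)+1) * Real.sqrt ((i:ℝ)+1)) := by rw [hcast1]
          have step2 := term_bound (M+1) (i+1) (by omega) (by omega)
          rw [hcast1, hcast2] at step2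
          calc cseq (i+1) / (((M:ℝ) + 1) - ((i+1:ℕ):ℝ))
              ≤ (2197 / (((i:ℝ)+1) * Real.sqrt ((i:ℝ)+1))) / (mr - ((i:ℝ)+1)) := step1
            _ = 2197 * (1 / ((((i:ℝ)+1) * Real.sqrt ((i:ℝ)+1)) * (mr - ((i:ℝ)+1)))) := by
                field_simp
            _ ≤ 2197 * ((2 / mr) * (1 / (((i:ℝ)+1) * Real.sqrt ((i:ℝ)+1))) +
                (2 * Real.sqrt 2 / (mr * Real.sqrt mr)) * (1 / (mr - ((i:ℝ)+1)))) := by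
                apply mul_le_mul_of_nonneg_left step2 (by norm_num)
        calc ∑ i ∈ range M, cseq (i+1) / (((M:ℝ) + 1) - ((i+1:ℕ):ℝ))
            ≤ ∑ i ∈ range M, 2197 * ((2 / mr) * (1 / (((i:ℝ)+1) * Real.sqrt ((i:ℝ)+1))) +
              (2 * Real.sqrt 2 / (mr * Real.sqrt mr)) * (1 / (mr - ((i:ℝ)+1)))) :=
              Finset.sum_le_sum termwise
          _ = 2197 * ((2 / mr) * (∑ i ∈ range M, 1 / (((i:ℝ)+1) * Real.sqrt ((i:ℝ)+1))) +
              (2 * Real.sqrt 2 / (mr * Real.sqrt mr)) * (∑ i ∈ range M, 1 / (mr - ((i:ℝ)+1)))) := by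
              rw [← Finset.mul_sum, Finset.sum_add_distrib, ← Finset.mul_sum, ← Finset.mul_sum]
          _ ≤ 26364 / mr := by
              have hQ := Q_le M
              have hH : ∑ i ∈ range M, 1 / (mr - ((i:ℝ)+1)) ≤ 2 * Real.sqrt mr := by
                have e : ∀ i ∈ range M, 1 / (mr - ((i:ℝ)+1)) = 1 / ((M:ℝ) - i) := by
                  intro i _
                  rw [hmr]; congr 1; ring
                rw [Finset.sum_congr rfl e, reflect_harm]
                have h1 := harm_le M
                have h2 : Real.sqrt (M:ℝ) ≤ Real.sqrt mr := Real.sqrt_le_sqrt (by rw [hmr]; linarith)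
                linarith
              have hQ0 : 0 ≤ ∑ i ∈ range M, 1 / (((i:ℝ)+1) * Real.sqrt ((i:ℝ)+1)) := by
                apply Finset.sum_nonneg; intro i _; positivity
              have hH0 : 0 ≤ ∑ i ∈ range M, 1 / (mr - ((i:ℝ)+1)) := by
                apply Finset.sum_nonneg
                intro i hi
                rw [Finset.mem_range] at hi
                have : (i:ℝ) + 1 ≤ (M:ℝ) := by exact_mod_cast hi
                have : 0 < mr - ((i:ℝ)+1) := by rw [hmr]; linarith
                positivity
              have hterm2 : (2 * Real.sqrt 2 / (mr * Real.sqrt mr)) * (2 * Real.sqrt mr) = 4 * Real.sqrt 2 / mr := by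
                field_simp
                ring
              have hs2 : Real.sqrt 2 ≤ 3/2 := sqrt2_le
              have hs2' : 0 ≤ Real.sqrt 2 := Real.sqrt_nonneg 2
              calc 2197 * ((2 / mr) * (∑ i ∈ range M, 1 / (((i:ℝ)+1) * Real.sqrt ((i:ℝ)+1))) +
                  (2 * Real.sqrt 2 / (mr * Real.sqrt mr)) * (∑ i ∈ range M, 1 / (mr - ((i:ℝ)+1))))
                  ≤ 2197 * ((2 / mr) * 3 + (2 * Real.sqrt 2 / (mr * Real.sqrt mr)) * (2 * Real.sqrt mr)) := by
                    apply mul_le_mul_of_nonneg_left _ (by norm_num)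
                    have b1 : (2 / mr) * (∑ i ∈ range M, 1 / (((i:ℝ)+1) * Real.sqrt ((i:ℝ)+1))) ≤ (2 / mr) * 3 :=
                      mul_le_mul_of_nonneg_left hQ (by positivity)
                    have b2 : (2 * Real.sqrt 2 / (mr * Real.sqrt mr)) * (∑ i ∈ range M, 1 / (mr - ((i:ℝ)+1))) ≤
                        (2 * Real.sqrt 2 / (mr * Real.sqrt mr)) * (2 * Real.sqrt mr) :=
                      mul_le_mul_of_nonneg_left hH (by positivity)
                    linarith
                _ = (2197 * (6 + 4 * Real.sqrt 2)) / mr := by rw [hterm2]; ring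
                _ ≤ 26364 / mr := by
                    apply div_le_div_of_nonneg_right _ hmrpos.le
                    nlinarith
      -- combine
      have hc0 : 0 < (1:ℝ) / mr := by positivity
      have hcast : ((M+1:ℕ):ℝ) = mr := by rw [hmr]; push_cast; ring
      rw [h0, hcast, ← hmr]
      rw [← hmr] at hsum
      have heq : (1 / mr) * (26364 / mr + 1 / mr) = 26365 / (mr * mr) := by
        field_simp
        ring
      have hsq : Real.sqrt mr * Real.sqrt mr = mr := Real.mul_self_sqrt hmrpos.le
      have h13 : (13:ℝ) ≤ Real.sqrt mr := by
        have h1 : Real.sqrt 169 ≤ Real.sqrt mr := Real.sqrt_le_sqrt (by linarith)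
        rwa [show (169:ℝ) = 13^2 by norm_num, Real.sqrt_sq (by norm_num)] at h1
      have final2 : 26365 / (mr * mr) ≤ 2197 / (mr * Real.sqrt mr) := by
        rw [div_le_div_iff₀ (by positivity) (by positivity)]
        have hint1 : 26365 * (mr * Real.sqrt mr) ≤ 2197 * Real.sqrt mr * (mr * Real.sqrt mr) := by
          apply mul_le_mul_of_nonneg_right _ (by positivity)
          linarith
        nlinarith [hint1, hsq]
      calc 1 / mr * ((∑ i ∈ Finset.range M, cseq (i+1) / (mr - ((i+1:ℕ):ℝ))) + 1 / mr)
          ≤ 1 / mr * (26364 / mr + 1 / mr) :=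
            mul_le_mul_of_nonneg_left (add_le_add_left hsum _) hc0.le
        _ = 26365 / (mr * mr) := heq
        _ ≤ 2197 / (mr * Real.sqrt mr) := final2

set_option maxRecDepth 8000 in
lemma key2 (M : ℕ) : cseq (M+1) ≤ 26365 / (((M:ℝ) + 1) * ((M:ℝ) + 1)) := by
  set mr : ℝ := (M:ℝ) + 1 with hmr
  have hmrpos : (0:ℝ) < mr := by rw [hmr]; positivity
  have hsmr : 0 < Real.sqrt mr := Real.sqrt_pos.mpr hmrpos
  rw [cseq_succ M, Finset.sum_range_succ' (fun i => cseq i / (((M:ℝ) + 1) - (i:ℕ)))]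
  have h0 : cseq 0 / (((M:ℝ) + 1) - ((0:ℕ):ℝ)) = 1 / mr := by
    simp [cseq, hmr]
  have hsum : ∑ i ∈ range M, cseq (i+1) / (((M:ℝ) + 1) - ((i+1:ℕ):ℝ)) ≤ 26364 / mr := by
    have termwise : ∀ i ∈ range M, cseq (i+1) / (((M:ℝ) + 1) - ((i+1:ℕ):ℝ)) ≤
        2197 * ((2 / mr) * (1 / (((i:ℝ)+1) * Real.sqrt ((i:ℝ)+1))) +
          (2 * Real.sqrt 2 / (mr * Real.sqrt mr)) * (1 / (mr - ((i:ℝ)+1)))) := by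
      intro i hi
      rw [Finset.mem_range] at hi
      have hcast1 : ((i+1:ℕ):ℝ) = (i:ℝ) + 1 := by push_cast; ring
      have hcast2 : (((M+1:ℕ)):ℝ) = mr := by rw [hmr]; push_cast; ring
      have hjr1 : (1:ℝ) ≤ (i:ℝ) + 1 := by
        have : (0:ℝ) ≤ (i:ℝ) := Nat.cast_nonneg i
        linarith
      have hir : (i:ℝ) + 1 + 1 ≤ mr := by
        rw [hmr]; have : (i:ℝ) + 1 ≤ (M:ℝ) := by exact_mod_cast hi
        linarith
      have hbpos : (0:ℝ) < mr - ((i:ℝ)+1) := by linarith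
      have hsja : (0:ℝ) < ((i:ℝ)+1) * Real.sqrt ((i:ℝ)+1) := by positivity
      have step1 : cseq (i+1) / (((M:ℝ) + 1) - ((i+1:ℕ):ℝ)) ≤
          (2197 / (((i:ℝ)+1) * Real.sqrt ((i:ℝ)+1))) / (mr - ((i:ℝ)+1)) := by
        rw [hcast1, show ((M:ℝ) + 1) = mr from hmr.symm]
        apply div_le_div_of_nonneg_right _ hbpos.le
        have := key (i+1) (by omega)
        calc cseq (i+1) ≤ 2197 / (((i+1:ℕ):ℝ) * Real.sqrt ((i+1:ℕ):ℝ)) := this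
          _ = 2197 / (((i:ℝ)+1) * Real.sqrt ((i:ℝ)+1)) := by rw [hcast1]
      have step2 := term_bound (M+1) (i+1) (by omega) (by omega)
      rw [hcast1, hcast2] at step2
      calc cseq (i+1) / (((M:ℝ) + 1) - ((i+1:ℕ):ℝ))
          ≤ (2197 / (((i:ℝ)+1) * Real.sqrt ((i:ℝ)+1))) / (mr - ((i:ℝ)+1)) := step1
        _ = 2197 * (1 / ((((i:ℝ)+1) * Real.sqrt ((i:ℝ)+1)) * (mr - ((i:ℝ)+1)))) := by
            field_simp
        _ ≤ 2197 * ((2 / mr) * (1 / (((i:ℝ)+1) * Real.sqrt ((i:ℝ)+1))) +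
            (2 * Real.sqrt 2 / (mr * Real.sqrt mr)) * (1 / (mr - ((i:ℝ)+1)))) := by
            apply mul_le_mul_of_nonneg_left step2 (by norm_num)
    calc ∑ i ∈ range M, cseq (i+1) / (((M:ℝ) + 1) - ((i+1:ℕ):ℝ))
        ≤ ∑ i ∈ range M, 2197 * ((2 / mr) * (1 / (((i:ℝ)+1) * Real.sqrt ((i:ℝ)+1))) +
          (2 * Real.sqrt 2 / (mr * Real.sqrt mr)) * (1 / (mr - ((i:ℝ)+1)))) :=
          Finset.sum_le_sum termwise
      _ = 2197 * ((2 / mr) * (∑ i ∈ range M, 1 / (((i:ℝ)+1) * Real.sqrt ((i:ℝ)+1))) +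
          (2 * Real.sqrt 2 / (mr * Real.sqrt mr)) * (∑ i ∈ range M, 1 / (mr - ((i:ℝ)+1)))) := by
          rw [← Finset.mul_sum, Finset.sum_add_distrib, ← Finset.mul_sum, ← Finset.mul_sum]
      _ ≤ 26364 / mr := by
          have hQ := Q_le M
          have hH : ∑ i ∈ range M, 1 / (mr - ((i:ℝ)+1)) ≤ 2 * Real.sqrt mr := by
            have e : ∀ i ∈ range M, 1 / (mr - ((i:ℝ)+1)) = 1 / ((M:ℝ) - i) := by
              intro i _
              rw [hmr]; congr 1; ring
            rw [Finset.sum_congr rfl e, reflect_harm]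
            have h1 := harm_le M
            have h2 : Real.sqrt (M:ℝ) ≤ Real.sqrt mr := Real.sqrt_le_sqrt (by rw [hmr]; linarith)
            linarith
          have hQ0 : 0 ≤ ∑ i ∈ range M, 1 / (((i:ℝ)+1) * Real.sqrt ((i:ℝ)+1)) := by
            apply Finset.sum_nonneg; intro i _; positivity
          have hH0 : 0 ≤ ∑ i ∈ range M, 1 / (mr - ((i:ℝ)+1)) := by
            apply Finset.sum_nonneg
            intro i hi
            rw [Finset.mem_range] at hi
            have : (i:ℝ) + 1 ≤ (M:ℝ) := by exact_mod_cast hi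
            have : 0 < mr - ((i:ℝ)+1) := by rw [hmr]; linarith
            positivity
          have hterm2 : (2 * Real.sqrt 2 / (mr * Real.sqrt mr)) * (2 * Real.sqrt mr) = 4 * Real.sqrt 2 / mr := by
            field_simp
            ring
          have hs2 : Real.sqrt 2 ≤ 3/2 := sqrt2_le
          have hs2' : 0 ≤ Real.sqrt 2 := Real.sqrt_nonneg 2
          calc 2197 * ((2 / mr) * (∑ i ∈ range M, 1 / (((i:ℝ)+1) * Real.sqrt ((i:ℝ)+1))) +
              (2 * Real.sqrt 2 / (mr * Real.sqrt mr)) * (∑ i ∈ range M, 1 / (mr - ((i:ℝ)+1))))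
              ≤ 2197 * ((2 / mr) * 3 + (2 * Real.sqrt 2 / (mr * Real.sqrt mr)) * (2 * Real.sqrt mr)) := by
                apply mul_le_mul_of_nonneg_left _ (by norm_num)
                have b1 : (2 / mr) * (∑ i ∈ range M, 1 / (((i:ℝ)+1) * Real.sqrt ((i:ℝ)+1))) ≤ (2 / mr) * 3 :=
                  mul_le_mul_of_nonneg_left hQ (by positivity)
                have b2 : (2 * Real.sqrt 2 / (mr * Real.sqrt mr)) * (∑ i ∈ range M, 1 / (mr - ((i:ℝ)+1))) ≤
                    (2 * Real.sqrt 2 / (mr * Real.sqrt mr)) * (2 * Real.sqrt mr) :=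
                  mul_le_mul_of_nonneg_left hH (by positivity)
                linarith
            _ = (2197 * (6 + 4 * Real.sqrt 2)) / mr := by rw [hterm2]; ring
            _ ≤ 26364 / mr := by
                apply div_le_div_of_nonneg_right _ hmrpos.le
                nlinarith
  have hc0 : 0 < (1:ℝ) / mr := by positivity
  rw [h0, ← hmr]
  rw [← hmr] at hsum
  have heq : (1 / mr) * (26364 / mr + 1 / mr) = 26365 / (mr * mr) := by
    field_simp
    ring
  calc 1 / mr * ((∑ i ∈ Finset.range M, cseq (i+1) / (mr - ((i+1:ℕ):ℝ))) + 1 / mr)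
      ≤ 1 / mr * (26364 / mr + 1 / mr) :=
        mul_le_mul_of_nonneg_left (add_le_add_left hsum _) hc0.le
    _ = 26365 / (mr * mr) := heq

theorem stmt_16 :
    ∃ C : ℝ, 0 < C ∧ ∀ m : ℕ, 1 ≤ m → cseq m ≤ C / (m : ℝ) ^ 2 := by
  refine ⟨26365, by norm_num, ?_⟩
  intro m hm
  obtain ⟨M, rfl⟩ : ∃ M, m = M + 1 := ⟨m - 1, by omega⟩
  have h := key2 M
  have hc : ((M + 1 : ℕ) : ℝ) ^ 2 = ((M:ℝ) + 1) * ((M:ℝ) + 1) := by push_cast; ring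
  rw [hc]
  exact h
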